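/- (Discrete contraction/energy estimate for the deterministic BTW scheme) Suppose $\tau/h^2 \leq 1/4$. Then the explicit Euler iteration $u^{n+1} = u^n + \tau\,\Delta_h \tilde\phi_1(u^n)$ with initial value $u^0 = u^* \in \mathbb{R}^{Z-1}$ satisfies $\max_{0 \leq n \leq N+1} \|u^n\|_{-1}^2 \leq \|u^*\|_{-1}^2$. -/
import Mathlib

open Matrix

noncomputable def phi1 (x : ℝ) : ℝ := if 1 < x then 1 else if x < -1 then -1 else 0

lemma phi1_mul_le (x : ℝ) : phi1 x * phi1 x ≤ x * phi1 x := by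
  unfold phi1; split_ifs <;> nlinarith

lemma symm_dot {n : ℕ} (M : Matrix (Fin n) (Fin n) ℝ) (hM : Mᵀ = M)
    (x y : Fin n → ℝ) : M.mulVec x ⬝ᵥ y = x ⬝ᵥ M.mulVec y := by
  have hs : ∀ i j, M i j = M j i := fun i j => by
    conv_lhs => rw [← hM]
    rfl
  simp only [Matrix.mulVec, dotProduct, Finset.sum_mul, Finset.mul_sum]
  rw [Finset.sum_comm]
  apply Finset.sum_congr rfl; intro i _
  apply Finset.sum_congr rfl; intro j _
  rw [hs j i]; ring

lemma double_sum_symm {n : ℕ} (c : Fin n → Fin n → ℝ) (a : Fin n → ℝ)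
    (hc : ∀ i j, c i j = c j i) :
    ∑ i, ∑ j, c i j * (a i + a j) / 2 = ∑ i, ∑ j, c i j * a i := by
  have h2 : ∑ i, ∑ j, c i j * a j / 2 = ∑ i, ∑ j, c i j * a i / 2 := by
    rw [Finset.sum_comm]
    exact Finset.sum_congr rfl fun i _ => Finset.sum_congr rfl fun j _ => by rw [hc j i]
  calc ∑ i, ∑ j, c i j * (a i + a j) / 2
      = ∑ i, ∑ j, (c i j * a i / 2 + c i j * a j / 2) :=
        Finset.sum_congr rfl fun i _ => Finset.sum_congr rfl fun j _ => by ring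
    _ = (∑ i, ∑ j, c i j * a i / 2) + ∑ i, ∑ j, c i j * a j / 2 := by
        rw [← Finset.sum_add_distrib]
        exact Finset.sum_congr rfl fun i _ => by rw [Finset.sum_add_distrib]
    _ = (∑ i, ∑ j, c i j * a i / 2) + ∑ i, ∑ j, c i j * a i / 2 := by rw [h2]
    _ = ∑ i, ∑ j, c i j * a i := by
        rw [← Finset.sum_add_distrib]
        refine Finset.sum_congr rfl fun i _ => ?_
        rw [← Finset.sum_add_distrib]
        exact Finset.sum_congr rfl fun j _ => by ring

theorem stmt_16 (Z N : ℕ) (hZ : 2 ≤ Z) (h τ : ℝ) (hh : h = 1 / (Z : ℝ)) (hτ : 0 < τ)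
    (hCFL : τ / h ^ 2 ≤ 1 / 4)
    (D : Matrix (Fin (Z - 1)) (Fin (Z - 1)) ℝ)
    (hD : ∀ i j : Fin (Z - 1), D i j =
      if i = j then -(2 / h ^ 2)
      else if (i : ℕ) + 1 = (j : ℕ) ∨ (j : ℕ) + 1 = (i : ℕ) then 1 / h ^ 2 else 0)
    (ustar : Fin (Z - 1) → ℝ) (u : ℕ → Fin (Z - 1) → ℝ)
    (hu0 : u 0 = ustar)
    (hstep : ∀ n, u (n + 1) = u n + τ • (D.mulVec fun i => phi1 (u n i))) :
    ∀ n ≤ N + 1,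
      h * ∑ i, ((-D)⁻¹.mulVec (u n)) i * u n i ≤
        h * ∑ i, ((-D)⁻¹.mulVec ustar) i * ustar i := by
  have hZR : (0:ℝ) < (Z:ℝ) := by exact_mod_cast (by omega : 0 < Z)
  have hhpos : 0 < h := by rw [hh]; positivity
  have hh2 : (0:ℝ) < h ^ 2 := by positivity
  have hτle : τ ≤ h ^ 2 / 4 := by
    rw [div_le_div_iff₀ hh2 (by norm_num : (0:ℝ) < 4)] at hCFL; linarith
  set A : Matrix (Fin (Z-1)) (Fin (Z-1)) ℝ := -D with hA
  set E : (Fin (Z-1) → ℝ) → ℝ := fun v => A⁻¹.mulVec v ⬝ᵥ v with hE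
  have hAentry : ∀ i j, A i j =
      if i = j then 2 / h ^ 2
      else if (i : ℕ) + 1 = (j : ℕ) ∨ (j : ℕ) + 1 = (i : ℕ) then -(1 / h ^ 2) else 0 := by
    intro i j
    have : A i j = -(D i j) := rfl
    rw [this, hD]
    split_ifs <;> simp
  have hAsymm : Aᵀ = A := by
    ext i j
    show A j i = A i j
    rw [hAentry, hAentry]
    rcases eq_or_ne i j with rfl | hne
    · simp
    · rw [if_neg (Ne.symm hne), if_neg hne]
      exact if_congr or_comm rfl rfl
  suffices key : ∀ n, E (u (n+1)) ≤ E (u n) by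
    intro n _
    have hmono : ∀ m, E (u m) ≤ E (u 0) := by
      intro m
      induction m with
      | zero => exact le_refl _
      | succ k ih => exact (key k).trans ih
    have := hmono n
    rw [hu0] at this
    exact mul_le_mul_of_nonneg_left this hhpos.le
  by_cases hdet : IsUnit A.det
  swap
  · have hinv : A⁻¹ = 0 := Matrix.nonsing_inv_apply_not_isUnit A hdet
    intro n
    simp [hE, hinv]
  intro n
  have hBsymm : (A⁻¹)ᵀ = A⁻¹ := by rw [Matrix.transpose_nonsing_inv, hAsymm]
  have hBA : A⁻¹ * A = 1 := Matrix.nonsing_inv_mul A hdet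
  set v := u n with hv
  set φ : Fin (Z-1) → ℝ := fun i => phi1 (v i) with hφ
  have hw : u (n+1) = v + τ • (D.mulVec φ) := hstep n
  have hDA : D = -A := by simp [hA]
  have hBDφ : A⁻¹.mulVec (D.mulVec φ) = -φ := by
    rw [hDA, Matrix.neg_mulVec, Matrix.mulVec_neg, Matrix.mulVec_mulVec, hBA,
      Matrix.one_mulVec]
  have expand : E (u (n+1)) = E v - 2*τ*(v ⬝ᵥ φ) + τ^2 * (φ ⬝ᵥ A.mulVec φ) := by
    rw [hw]
    show A⁻¹.mulVec (v + τ • D.mulVec φ) ⬝ᵥ (v + τ • D.mulVec φ) = _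
    have t1 : A⁻¹.mulVec v ⬝ᵥ D.mulVec φ = -(v ⬝ᵥ φ) := by
      rw [symm_dot _ hBsymm, hBDφ, dotProduct_neg]
    have t3 : φ ⬝ᵥ D.mulVec φ = -(φ ⬝ᵥ A.mulVec φ) := by
      rw [hDA, Matrix.neg_mulVec, dotProduct_neg]
    simp only [Matrix.mulVec_add, Matrix.mulVec_smul, hBDφ, add_dotProduct,
      dotProduct_add, smul_dotProduct, dotProduct_smul,
      neg_dotProduct, dotProduct_neg, t1, t3,
      dotProduct_comm φ v, smul_eq_mul]
    simp only [hE]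
    ring
  have hφφ : φ ⬝ᵥ φ ≤ v ⬝ᵥ φ :=
    Finset.sum_le_sum fun i _ => phi1_mul_le (v i)
  have hφnn : 0 ≤ φ ⬝ᵥ φ := Finset.sum_nonneg fun i _ => mul_self_nonneg _
  -- row sums of |A| are at most 4/h²
  have hrow : ∀ i : Fin (Z-1),
      (∑ j, (if i = j then 2/h^2 else if (i:ℕ)+1 = (j:ℕ) ∨ (j:ℕ)+1 = (i:ℕ) then 1/h^2 else 0))
        ≤ 4/h^2 := by
    intro i
    have hsplitc : ∀ j : Fin (Z-1),
        (if i = j then 2/h^2 else if (i:ℕ)+1 = (j:ℕ) ∨ (j:ℕ)+1 = (i:ℕ) then 1/h^2 else 0)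
        = (if i = j then 2/h^2 else 0)
          + (if (i:ℕ)+1 = (j:ℕ) ∨ (j:ℕ)+1 = (i:ℕ) then 1/h^2 else 0) := by
      intro j
      rcases eq_or_ne i j with rfl | hne
      · simp [show ¬((i:ℕ)+1 = (i:ℕ) ∨ (i:ℕ)+1 = (i:ℕ)) by omega]
      · simp [hne]
    rw [Finset.sum_congr rfl fun j _ => hsplitc j, Finset.sum_add_distrib]
    have e1 : (∑ j : Fin (Z-1), if i = j then 2/h^2 else (0:ℝ)) = 2/h^2 := by
      simp [Finset.sum_ite_eq]
    have e2 : (∑ j : Fin (Z-1), if (i:ℕ)+1 = (j:ℕ) ∨ (j:ℕ)+1 = (i:ℕ) then 1/h^2 else (0:ℝ))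
        = ((Finset.univ.filter fun j : Fin (Z-1) =>
            (i:ℕ)+1 = (j:ℕ) ∨ (j:ℕ)+1 = (i:ℕ)).card : ℝ) * (1/h^2) := by
      rw [← Finset.sum_filter, Finset.sum_const, nsmul_eq_mul]
    have hcard : (Finset.univ.filter fun j : Fin (Z-1) =>
        (i:ℕ)+1 = (j:ℕ) ∨ (j:ℕ)+1 = (i:ℕ)).card ≤ 2 := by
      rw [Finset.filter_or]
      refine le_trans (Finset.card_union_le _ _) ?_
      have c1 : (Finset.univ.filter fun j : Fin (Z-1) => (i:ℕ)+1 = (j:ℕ)).card ≤ 1 :=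
        Finset.card_le_one.mpr (by
          intro a ha b hb
          simp only [Finset.mem_filter] at ha hb
          exact Fin.ext (by omega))
      have c2 : (Finset.univ.filter fun j : Fin (Z-1) => (j:ℕ)+1 = (i:ℕ)).card ≤ 1 :=
        Finset.card_le_one.mpr (by
          intro a ha b hb
          simp only [Finset.mem_filter] at ha hb
          exact Fin.ext (by omega))
      omega
    rw [e1, e2]
    have hcardR : ((Finset.univ.filter fun j : Fin (Z-1) =>
        (i:ℕ)+1 = (j:ℕ) ∨ (j:ℕ)+1 = (i:ℕ)).card : ℝ) ≤ 2 := by exact_mod_cast hcard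
    have h1h : (0:ℝ) ≤ 1/h^2 := by positivity
    have h44 : (4:ℝ)/h^2 = 2/h^2 + 2*(1/h^2) := by ring
    have hm := mul_le_mul_of_nonneg_right hcardR h1h
    linarith
  -- quadratic form bound
  have hquad : φ ⬝ᵥ A.mulVec φ ≤ 4/h^2 * (φ ⬝ᵥ φ) := by
    set c : Fin (Z-1) → Fin (Z-1) → ℝ := fun i j =>
      if i = j then 2/h^2 else if (i:ℕ)+1 = (j:ℕ) ∨ (j:ℕ)+1 = (i:ℕ) then 1/h^2 else 0
      with hcdef
    have csym : ∀ i j, c i j = c j i := by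
      intro i j
      rcases eq_or_ne i j with rfl | hne
      · rfl
      · show (if i = j then _ else _) = (if j = i then _ else _)
        rw [if_neg hne, if_neg (Ne.symm hne)]
        exact if_congr or_comm rfl rfl
    have hc : ∀ i j : Fin (Z-1), φ i * (A i j * φ j) ≤ c i j * (φ i * φ i + φ j * φ j) / 2 := by
      intro i j
      rw [hAentry]
      show _ ≤ (if i = j then 2/h^2 else if _ ∨ _ then 1/h^2 else 0) * _ / 2
      split_ifs with h1 h2
      · subst h1; exact le_of_eq (by ring)
      · nlinarith [mul_nonneg (by positivity : (0:ℝ) ≤ 1/h^2) (sq_nonneg (φ i + φ j))]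
      · simp
    calc φ ⬝ᵥ A.mulVec φ = ∑ i, ∑ j, φ i * (A i j * φ j) := by
          simp [dotProduct, Matrix.mulVec, Finset.mul_sum]
      _ ≤ ∑ i, ∑ j, c i j * (φ i * φ i + φ j * φ j) / 2 :=
          Finset.sum_le_sum fun i _ => Finset.sum_le_sum fun j _ => hc i j
      _ = ∑ i, ∑ j, c i j * (φ i * φ i) := double_sum_symm c _ csym
      _ ≤ ∑ i, 4/h^2 * (φ i * φ i) := by
          refine Finset.sum_le_sum fun i _ => ?_
          rw [← Finset.sum_mul]
          exact mul_le_mul_of_nonneg_right (hrow i) (mul_self_nonneg _)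
      _ = 4/h^2 * (φ ⬝ᵥ φ) := by
          simp [dotProduct, Finset.mul_sum]
  rw [expand]
  have h4 : 4*τ/h^2 ≤ 1 := by rw [div_le_one hh2]; linarith
  have key4 : τ^2 * (4/h^2 * (φ ⬝ᵥ φ)) ≤ τ * (φ ⬝ᵥ φ) := by
    calc τ^2 * (4/h^2 * (φ ⬝ᵥ φ)) = (τ * (φ ⬝ᵥ φ)) * (4*τ/h^2) := by ring
      _ ≤ (τ * (φ ⬝ᵥ φ)) * 1 :=
          mul_le_mul_of_nonneg_left h4 (mul_nonneg hτ.le hφnn)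
      _ = τ * (φ ⬝ᵥ φ) := mul_one _
  have s1 : τ^2 * (φ ⬝ᵥ A.mulVec φ) ≤ τ^2 * (4/h^2 * (φ ⬝ᵥ φ)) :=
    mul_le_mul_of_nonneg_left hquad (sq_nonneg τ)
  have s2 : τ * (φ ⬝ᵥ φ) ≤ τ * (v ⬝ᵥ φ) := mul_le_mul_of_nonneg_left hφφ hτ.le
  have s3 : 0 ≤ τ * (φ ⬝ᵥ φ) := mul_nonneg hτ.le hφnn
  linarith
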